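/- Let F(x) = 4x(1−x) be the logistic map with parameter r = 4. Let p₀ ∈ L¹[0,1] be a probability density (p₀ ≥ 0 and ∫₀¹ p₀ = 1), and let μ₀ be the measure on ℝ with density p₀ (supported in [0,1]) with respect to Lebesgue measure. Then for every measurable set A ⊆ [0,1], the pushforward measures μ_n = (F^n)_*μ₀ satisfy lim_{n→∞} μ_n(A) = ∫_A q(x) dx, where q(x) = 1/(π·√(x(1−x))) for 0 < x < 1. -/

import Mathlib

open MeasureTheory Filter Topology

/-- The logistic map with parameter `r = 4`. -/
noncomputable def logisticMap (x : ℝ) : ℝ := 4 * x * (1 - x)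

/-- The invariant density of the logistic map with `r = 4`. -/
noncomputable def logisticDensity (x : ℝ) : ℝ :=
  if 0 < x ∧ x < 1 then 1 / (Real.pi * Real.sqrt (x * (1 - x))) else 0

noncomputable def sMap (θ : ℝ) : ℝ := Real.sin (Real.pi * θ) ^ 2

lemma sMap_eq_cos (θ : ℝ) : sMap θ = 1/2 - Real.cos (2 * (Real.pi * θ)) / 2 :=
  Real.sin_sq_eq_half_sub _

lemma sMap_fract (y : ℝ) : sMap (Int.fract y) = sMap y := by
  rw [sMap_eq_cos, sMap_eq_cos, Int.fract]
  have : 2 * (Real.pi * (y - ⌊y⌋)) = 2 * (Real.pi * y) - (⌊y⌋ : ℝ) * (2 * Real.pi) := by ring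
  rw [this, Real.cos_sub_int_mul_two_pi]

lemma logisticMap_sMap (θ : ℝ) : logisticMap (sMap θ) = sMap (2 * θ) := by
  have h1 : Real.sin (Real.pi * (2*θ)) = 2 * Real.sin (Real.pi * θ) * Real.cos (Real.pi * θ) := by
    rw [show Real.pi * (2*θ) = 2 * (Real.pi * θ) by ring, Real.sin_two_mul]
  have h2 := Real.sin_sq_add_cos_sq (Real.pi * θ)
  simp only [logisticMap, sMap, h1]
  nlinarith [h2]

lemma iter_logisticMap_sMap (n : ℕ) (θ : ℝ) : logisticMap^[n] (sMap θ) = sMap (2^n * θ) := by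
  induction n generalizing θ with
  | zero => simp
  | succ n ih =>
    rw [Function.iterate_succ_apply, logisticMap_sMap, ih]
    ring_nf

lemma sMap_one_sub (θ : ℝ) : sMap (1 - θ) = sMap θ := by
  simp only [sMap]
  rw [show Real.pi * (1 - θ) = Real.pi - Real.pi * θ by ring, Real.sin_pi_sub]

lemma hasDerivAt_sMap (θ : ℝ) :
    HasDerivAt sMap (Real.pi * Real.sin (2 * (Real.pi * θ))) θ := by
  have h : HasDerivAt (fun θ : ℝ => Real.sin (Real.pi * θ)) (Real.cos (Real.pi * θ) * Real.pi) θ := by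
    exact ((Real.hasDerivAt_sin (Real.pi * θ)).comp θ ((hasDerivAt_id θ).const_mul Real.pi)).congr_deriv (by simp)
  have := h.pow 2
  refine this.congr_deriv ?_
  rw [Real.sin_two_mul, show (2:ℕ) - 1 = 1 from rfl, pow_one]
  ring


lemma sMap_injOn : Set.InjOn sMap (Set.Icc 0 (1/2)) := by
  intro a ha b hb hab
  have pi_pos := Real.pi_pos
  simp only [sMap] at hab
  have hsa : Real.sin (Real.pi * a) = Real.sin (Real.pi * b) := by
    have h1 : 0 ≤ Real.sin (Real.pi * a) :=
      Real.sin_nonneg_of_nonneg_of_le_pi (by nlinarith [ha.1]) (by nlinarith [ha.2])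
    have h2 : 0 ≤ Real.sin (Real.pi * b) :=
      Real.sin_nonneg_of_nonneg_of_le_pi (by nlinarith [hb.1]) (by nlinarith [hb.2])
    nlinarith [hab]
  have hmem : ∀ c : ℝ, c ∈ Set.Icc (0:ℝ) (1/2) → Real.pi * c ∈ Set.Icc (-(Real.pi/2)) (Real.pi/2) := by
    intro c hc
    constructor <;> nlinarith [hc.1, hc.2]
  have := Real.injOn_sin (hmem a ha) (hmem b hb) hsa
  exact mul_left_cancel₀ (ne_of_gt pi_pos) this

lemma sMap_zero : sMap 0 = 0 := by simp [sMap]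

lemma sMap_half : sMap (1/2) = 1 := by
  unfold sMap
  rw [show Real.pi * (1/2) = Real.pi/2 by ring, Real.sin_pi_div_two]
  norm_num

lemma sMap_mem_Icc {θ : ℝ} : sMap θ ∈ Set.Icc (0:ℝ) 1 := by
  constructor
  · exact sq_nonneg _
  · simpa [sMap] using Real.sin_sq_le_one (Real.pi * θ)

lemma sMap_continuous : Continuous sMap := by
  unfold sMap; fun_prop

lemma sMap_image : sMap '' (Set.Icc 0 (1/2)) = Set.Icc 0 1 := by
  apply Set.Subset.antisymm
  · rintro x ⟨θ, _, rfl⟩; exact sMap_mem_Icc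
  · have := intermediate_value_Icc (by norm_num : (0:ℝ) ≤ 1/2) sMap_continuous.continuousOn
    rw [sMap_zero, sMap_half] at this
    exact this

lemma sMap_image_inter (W : Set ℝ) :
    sMap '' (Set.Icc 0 (1/2) ∩ sMap ⁻¹' W) = W ∩ Set.Icc 0 1 := by
  apply Set.Subset.antisymm
  · rintro x ⟨θ, ⟨hθ, hW⟩, rfl⟩
    exact ⟨hW, sMap_mem_Icc⟩
  · rintro x ⟨hxW, hx01⟩
    obtain ⟨θ, hθ, rfl⟩ := (sMap_image ▸ hx01 : _)
    exact ⟨θ, ⟨hθ, hxW⟩, rfl⟩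

lemma dyadic_union_raw (n : ℕ) :
    Set.Ico (0:ℝ) 1 = ⋃ k ∈ Finset.range (2^n), Set.Ico ((k:ℝ)/2^n) (((k:ℝ)+1)/2^n) := by
  have h2n : (0:ℝ) < 2^n := by positivity
  ext θ
  simp only [Set.mem_iUnion, Finset.mem_range, Set.mem_Ico, exists_prop]
  constructor
  · rintro ⟨h0, h1⟩
    set m : ℤ := ⌊(2:ℝ)^n * θ⌋ with hm
    have hm0 : 0 ≤ m := Int.floor_nonneg.2 (by positivity)
    have hmlt : m < (2^n : ℤ) := by
      apply Int.floor_lt.2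
      push_cast
      nlinarith
    have hfl := Int.floor_le ((2:ℝ)^n * θ)
    have hfl2 := Int.lt_floor_add_one ((2:ℝ)^n * θ)
    refine ⟨m.toNat, ?_, ?_, ?_⟩
    · have h1 : (m.toNat : ℤ) < ((2^n : ℕ) : ℤ) := by
        rw [Int.toNat_of_nonneg hm0]; exact_mod_cast hmlt
      exact_mod_cast h1
    · rw [div_le_iff₀ h2n, mul_comm,
        show ((m.toNat:ℝ)) = (m:ℝ) from by exact_mod_cast Int.toNat_of_nonneg hm0, hm]
      exact hfl
    · rw [lt_div_iff₀ h2n, mul_comm,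
        show ((m.toNat:ℝ)) = (m:ℝ) from by exact_mod_cast Int.toNat_of_nonneg hm0, hm]
      exact hfl2
  · rintro ⟨k, hk, hk1, hk2⟩
    have hkr : ((k:ℝ)+1) ≤ 2^n := by
      have : (k:ℝ) + 1 ≤ ((2^n : ℕ) : ℝ) := by exact_mod_cast Nat.succ_le_of_lt hk
      simpa using this
    constructor
    · have : (0:ℝ) ≤ (k:ℝ)/2^n := by positivity
      linarith
    · calc θ < ((k:ℝ)+1)/2^n := hk2
      _ ≤ 1 := by rw [div_le_one h2n]; linarith

lemma fract_piece_raw (n : ℕ) (k : ℕ) (B : Set ℝ) (hBs : B ⊆ Set.Ico 0 1) :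
    (fun θ => Int.fract ((2:ℝ)^n * θ)) ⁻¹' B ∩ Set.Ico ((k:ℝ)/2^n) (((k:ℝ)+1)/2^n)
      = (fun θ => (2:ℝ)^n * θ - k) ⁻¹' B := by
  have h2n : (0:ℝ) < 2^n := by positivity
  ext θ
  simp only [Set.mem_inter_iff, Set.mem_preimage, Set.mem_Ico]
  constructor
  · rintro ⟨hB, h1, h2⟩
    have hfloor : ⌊(2:ℝ)^n * θ⌋ = (k : ℤ) := by
      apply Int.floor_eq_iff.2
      constructor
      · push_cast; rw [div_le_iff₀ h2n] at h1; linarith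
      · push_cast; rw [lt_div_iff₀ h2n] at h2; linarith
    rwa [Int.fract, hfloor] at hB
    
  · intro hB
    have hmem := hBs hB
    simp only [Set.mem_Ico] at hmem
    have hfloor : ⌊(2:ℝ)^n * θ⌋ = (k : ℤ) := by
      apply Int.floor_eq_iff.2
      constructor
      · push_cast; linarith [hmem.1]
      · push_cast; linarith [hmem.2]
    refine ⟨?_, ?_, ?_⟩
    · rwa [Int.fract, hfloor]
    · rw [div_le_iff₀ h2n]; linarith [hmem.1]
    · rw [lt_div_iff₀ h2n]; linarith [hmem.2]

lemma volume_affine_preimage_raw (n : ℕ) (k : ℕ) (B : Set ℝ) :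
    volume ((fun θ => (2:ℝ)^n * θ - k) ⁻¹' B) = ENNReal.ofReal ((2:ℝ)⁻¹^n) * volume B := by
  have h2n : ((2:ℝ)^n) ≠ 0 := by positivity
  have : (fun θ => (2:ℝ)^n * θ - k) = (fun y => y + (-(k:ℝ))) ∘ (fun θ => (2:ℝ)^n * θ) := by
    funext θ; simp [sub_eq_add_neg]
  rw [this, Set.preimage_comp]
  rw [show (fun θ => (2:ℝ)^n * θ) = ((2:ℝ)^n * ·) by rfl]
  rw [Real.volume_preimage_mul_left h2n, measure_preimage_add_right volume _ B]
  congr 1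
  rw [abs_of_nonneg (by positivity)]
  rw [inv_pow]

def dI (n k : ℕ) : Set ℝ := Set.Ico ((k:ℝ)/2^n) (((k:ℝ)+1)/2^n)
def dJ (n k : ℕ) (B : Set ℝ) : Set ℝ := (fun θ => (2:ℝ)^n * θ - k) ⁻¹' B

lemma dyadic_union (n : ℕ) : Set.Ico (0:ℝ) 1 = ⋃ k ∈ Finset.range (2^n), dI n k :=
  dyadic_union_raw n

lemma fract_piece (n : ℕ) (k : ℕ) (B : Set ℝ) (hBs : B ⊆ Set.Ico 0 1) :
    (fun θ => Int.fract ((2:ℝ)^n * θ)) ⁻¹' B ∩ dI n k = dJ n k B :=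
  fract_piece_raw n k B hBs

lemma volume_dJ (n : ℕ) (k : ℕ) (B : Set ℝ) :
    volume (dJ n k B) = ENNReal.ofReal ((1:ℝ)/2^n) * volume B := by
  rw [show ((1:ℝ)/2^n) = (2:ℝ)⁻¹^n by rw [inv_pow, one_div]]
  exact volume_affine_preimage_raw n k B

lemma dI_measurable (n k : ℕ) : MeasurableSet (dI n k) := measurableSet_Ico

lemma dJ_measurable (n k : ℕ) {B : Set ℝ} (hB : MeasurableSet B) : MeasurableSet (dJ n k B) :=
  (((continuous_const.mul continuous_id).sub continuous_const).measurable) hB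

lemma volume_dI (n k : ℕ) : volume (dI n k) = ENNReal.ofReal ((1:ℝ)/2^n) := by
  have h2n : (0:ℝ) < 2^n := by positivity
  rw [dI, Real.volume_Ico]
  congr 1
  field_simp
  ring

lemma dJ_subset (n k : ℕ) {B : Set ℝ} (hBs : B ⊆ Set.Ico 0 1) : dJ n k B ⊆ dI n k := by
  rw [← fract_piece n k B hBs]; exact Set.inter_subset_right

lemma dI_disjoint {n k l : ℕ} (hkl : k ≠ l) : Disjoint (dI n k) (dI n l) := by
  have h2n : (0:ℝ) < 2^n := by positivity
  have key : ∀ k l : ℕ, k < l → ((k:ℝ)+1)/2^n ≤ (l:ℝ)/2^n := by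
    intro k l h
    apply div_le_div_of_nonneg_right ?_ h2n.le
    exact_mod_cast Nat.succ_le_of_lt h
  rcases hkl.lt_or_gt with h | h
  · exact Set.Ico_disjoint_Ico.2 (le_trans (min_le_left _ _) (le_trans (key _ _ h) (le_max_right _ _)))
  · exact Set.Ico_disjoint_Ico.2 (le_trans (min_le_right _ _) (le_trans (key _ _ h) (le_max_left _ _)))

lemma core_cont (φ : ℝ → ℝ) (hφc : Continuous φ) (hφs : HasCompactSupport φ)
    (B : Set ℝ) (hB : MeasurableSet B) (hBs : B ⊆ Set.Ico 0 1) :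
    Tendsto (fun n : ℕ => ∫ θ in (fun θ => Int.fract ((2:ℝ)^n * θ)) ⁻¹' B ∩ Set.Ico 0 1, φ θ)
      atTop (𝓝 ((volume B).toReal * ∫ θ in Set.Ico (0:ℝ) 1, φ θ)) := by
  have hφint : Integrable φ := hφc.integrable_of_hasCompactSupport hφs
  have hvolB : volume B ≤ 1 := by
    calc volume B ≤ volume (Set.Ico (0:ℝ) 1) := measure_mono hBs
    _ = 1 := by simp
  set Lb := (volume B).toReal with hLbdef
  have hBfin : volume B ≠ ⊤ := (lt_of_le_of_lt hvolB (by norm_num)).ne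
  have hLb0 : 0 ≤ Lb := ENNReal.toReal_nonneg
  have hLb1 : Lb ≤ 1 := by
    rw [hLbdef, ← ENNReal.toReal_one]
    exact ENNReal.toReal_mono (by norm_num) hvolB
  have hu : UniformContinuous φ := hφs.uniformContinuous_of_continuous hφc
  rw [Metric.tendsto_atTop]
  intro ε hε
  obtain ⟨δ, hδ0, hδ⟩ := Metric.uniformContinuous_iff.1 hu (ε/4) (by linarith)
  obtain ⟨N, hN⟩ : ∃ N : ℕ, ((1:ℝ)/2)^N < δ :=
    exists_pow_lt_of_lt_one hδ0 (by norm_num)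
  refine ⟨N, fun n hn => ?_⟩
  have h2n : (0:ℝ) < 2^n := by positivity
  set rn := (1:ℝ)/2^n with hrn
  have hrn0 : 0 < rn := by positivity
  have hrnδ : rn < δ := by
    calc rn = ((1:ℝ)/2)^n := by rw [hrn, div_pow, one_pow]
    _ ≤ ((1:ℝ)/2)^N := pow_le_pow_of_le_one (by norm_num) (by norm_num) hn
    _ < δ := hN
  -- basic per-k facts
  have hvolJ : ∀ k : ℕ, (volume (dJ n k B)).toReal = rn * Lb := by
    intro k
    rw [volume_dJ, ENNReal.toReal_mul, ENNReal.toReal_ofReal hrn0.le]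
  have hvolJfin : ∀ k : ℕ, volume (dJ n k B) < ⊤ := by
    intro k
    rw [volume_dJ]
    exact ENNReal.mul_lt_top ENNReal.ofReal_lt_top (lt_of_le_of_lt hvolB (by norm_num))
  have hvolIfin : ∀ k : ℕ, volume (dI n k) < ⊤ := by
    intro k; rw [volume_dI]; exact ENNReal.ofReal_lt_top
  have hvolI : ∀ k : ℕ, (volume (dI n k)).toReal = rn := by
    intro k; rw [volume_dI, ENNReal.toReal_ofReal hrn0.le]
  -- oscillation bound on dI n k
  have hosc : ∀ k : ℕ, ∀ θ ∈ dI n k, ‖φ θ - φ ((k:ℝ)/2^n)‖ ≤ ε/4 := by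
    intro k θ hθ
    have h1 : dist θ ((k:ℝ)/2^n) < δ := by
      rw [Real.dist_eq, abs_of_nonneg (by linarith [hθ.1])]
      have := hθ.2
      have h3 : ((k:ℝ)+1)/2^n = (k:ℝ)/2^n + rn := by rw [hrn]; ring
      rw [h3] at this
      linarith
    exact (le_of_lt (by simpa [Real.dist_eq] using hδ h1))
  -- estimate on each piece
  have est : ∀ k : ℕ, |(∫ θ in dJ n k B, φ θ) - Lb * ∫ θ in dI n k, φ θ| ≤ 2 * (ε/4) * rn := by
    intro k
    set c := φ ((k:ℝ)/2^n) with hc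
    have e1 : |(∫ θ in dJ n k B, φ θ) - c * (rn * Lb)| ≤ ε/4 * (rn * Lb) := by
      have : (∫ θ in dJ n k B, φ θ) - c * (rn * Lb) = ∫ θ in dJ n k B, (φ θ - c) := by
        rw [integral_sub (hφint.integrableOn) (integrableOn_const (hvolJfin k).ne)]
        rw [setIntegral_const, measureReal_def, hvolJ k, smul_eq_mul, mul_comm]
      rw [this]
      have := norm_setIntegral_le_of_norm_le_const (hvolJfin k)
        (fun θ hθ => hosc k θ (dJ_subset n k hBs hθ)) (C := ε/4)
      rw [measureReal_def, hvolJ k] at this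
      calc |∫ θ in dJ n k B, (φ θ - c)| = ‖∫ θ in dJ n k B, (φ θ - c)‖ := (Real.norm_eq_abs _).symm
        _ ≤ ε/4 * (rn * Lb) := by simpa [mul_comm] using this
    have e2 : |(∫ θ in dI n k, φ θ) - c * rn| ≤ ε/4 * rn := by
      have : (∫ θ in dI n k, φ θ) - c * rn = ∫ θ in dI n k, (φ θ - c) := by
        rw [integral_sub (hφint.integrableOn) (integrableOn_const (hvolIfin k).ne)]
        rw [setIntegral_const, measureReal_def, hvolI k, smul_eq_mul, mul_comm]
      rw [this]
      have := norm_setIntegral_le_of_norm_le_const (hvolIfin k)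
        (fun θ hθ => hosc k θ hθ) (C := ε/4)
      rw [measureReal_def, hvolI k] at this
      calc |∫ θ in dI n k, (φ θ - c)| = ‖∫ θ in dI n k, (φ θ - c)‖ := (Real.norm_eq_abs _).symm
        _ ≤ ε/4 * rn := by simpa [mul_comm] using this
    calc |(∫ θ in dJ n k B, φ θ) - Lb * ∫ θ in dI n k, φ θ|
        ≤ |(∫ θ in dJ n k B, φ θ) - c * (rn * Lb)| + |c * (rn * Lb) - Lb * ∫ θ in dI n k, φ θ| := by
          exact abs_sub_le _ _ _
      _ ≤ ε/4 * (rn * Lb) + Lb * |(∫ θ in dI n k, φ θ) - c * rn| := by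
          have : |c * (rn * Lb) - Lb * ∫ θ in dI n k, φ θ| = Lb * |(∫ θ in dI n k, φ θ) - c * rn| := by
            rw [abs_sub_comm,
              show (Lb * ∫ θ in dI n k, φ θ) - c * (rn * Lb) = Lb * ((∫ θ in dI n k, φ θ) - c * rn) by ring,
              abs_mul, abs_of_nonneg hLb0]
          rw [this]
          exact add_le_add e1 (le_refl _)
      _ ≤ ε/4 * (rn * Lb) + Lb * (ε/4 * rn) :=
          add_le_add (le_refl _) (mul_le_mul_of_nonneg_left e2 hLb0)
      _ ≤ 2 * (ε/4) * rn := by nlinarith [mul_nonneg (mul_nonneg hε.le hrn0.le) (sub_nonneg.2 hLb1)]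
  -- sums
  have hsum1 : ∫ θ in (fun θ => Int.fract ((2:ℝ)^n * θ)) ⁻¹' B ∩ Set.Ico 0 1, φ θ
      = ∑ k ∈ Finset.range (2^n), ∫ θ in dJ n k B, φ θ := by
    have hset : (fun θ => Int.fract ((2:ℝ)^n * θ)) ⁻¹' B ∩ Set.Ico 0 1
        = ⋃ k ∈ Finset.range (2^n), dJ n k B := by
      rw [dyadic_union n, Set.inter_iUnion₂]
      exact Set.iUnion₂_congr (fun k _ => fract_piece n k B hBs)
    rw [hset]
    exact integral_biUnion_finset (Finset.range (2^n)) (fun k _ => dJ_measurable n k hB)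
      (fun k _ l _ hkl => (dI_disjoint hkl).mono (dJ_subset n k hBs) (dJ_subset n l hBs))
      (fun k _ => hφint.integrableOn)
  have hsum2 : ∫ θ in Set.Ico (0:ℝ) 1, φ θ = ∑ k ∈ Finset.range (2^n), ∫ θ in dI n k, φ θ := by
    conv_lhs => rw [dyadic_union n]
    exact integral_biUnion_finset (Finset.range (2^n)) (fun k _ => dI_measurable n k)
      (fun k _ l _ hkl => dI_disjoint hkl)
      (fun k _ => hφint.integrableOn)
  rw [Real.dist_eq, hsum1, hsum2, Finset.mul_sum, ← Finset.sum_sub_distrib]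
  calc |∑ k ∈ Finset.range (2^n), ((∫ θ in dJ n k B, φ θ) - Lb * ∫ θ in dI n k, φ θ)|
      ≤ ∑ k ∈ Finset.range (2^n), |(∫ θ in dJ n k B, φ θ) - Lb * ∫ θ in dI n k, φ θ| :=
        Finset.abs_sum_le_sum_abs _ _
    _ ≤ ∑ _k ∈ Finset.range (2^n), 2 * (ε/4) * rn := Finset.sum_le_sum (fun k _ => est k)
    _ = (2^n : ℝ) * (2 * (ε/4) * rn) := by
        rw [Finset.sum_const, Finset.card_range, nsmul_eq_mul]
        push_cast
        ring
    _ < ε := by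
        rw [hrn]
        have : (2^n : ℝ) * (2 * (ε/4) * (1/2^n)) = ε/2 := by field_simp; ring
        rw [this]
        linarith

lemma core (ρ : ℝ → ℝ) (hnn : ∀ x, 0 ≤ ρ x)
    (hsupp : ∀ x, x ∉ Set.Ico (0:ℝ) 1 → ρ x = 0) (hint : Integrable ρ)
    (B : Set ℝ) (hB : MeasurableSet B) (hBs : B ⊆ Set.Ico 0 1) :
    Tendsto (fun n : ℕ => ∫ θ in (fun θ => Int.fract ((2:ℝ)^n * θ)) ⁻¹' B, ρ θ) atTop
      (𝓝 ((volume B).toReal * ∫ θ, ρ θ)) := by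
  have hvolB : volume B ≤ 1 := by
    calc volume B ≤ volume (Set.Ico (0:ℝ) 1) := measure_mono hBs
    _ = 1 := by simp
  set Lb := (volume B).toReal with hLbdef
  have hLb0 : 0 ≤ Lb := ENNReal.toReal_nonneg
  have hLb1 : Lb ≤ 1 := by
    rw [hLbdef, ← ENNReal.toReal_one]
    exact ENNReal.toReal_mono (by norm_num) hvolB
  have hρrestrict : ρ = (Set.Ico (0:ℝ) 1).indicator ρ := by
    funext θ
    rw [Set.indicator_apply]
    split_ifs with h
    · rfl
    · exact hsupp θ h
  rw [Metric.tendsto_atTop]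
  intro ε hε
  obtain ⟨φ, hφs, hφ1, hφc, hφint⟩ :=
    hint.exists_hasCompactSupport_integral_sub_le (show (0:ℝ) < ε/4 by linarith)
  obtain ⟨N, hN⟩ := Metric.tendsto_atTop.1 (core_cont φ hφc hφs B hB hBs) (ε/4) (by linarith)
  refine ⟨N, fun n hn => ?_⟩
  have hdiffint : Integrable (fun θ => ‖ρ θ - φ θ‖) := (hint.sub hφint).norm
  have hnormle : ∀ (S : Set ℝ), (∫ θ in S, ‖ρ θ - φ θ‖) ≤ ε/4 := by
    intro S
    calc (∫ θ in S, ‖ρ θ - φ θ‖) ≤ ∫ θ, ‖ρ θ - φ θ‖ :=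
      setIntegral_le_integral hdiffint (Filter.Eventually.of_forall (fun θ => norm_nonneg _))
    _ ≤ ε/4 := hφ1
  set Cn := (fun θ => Int.fract ((2:ℝ)^n * θ)) ⁻¹' B with hCn
  set Sn := Cn ∩ Set.Ico 0 1 with hSn
  -- restrict the ρ integrals to [0,1)
  have h1 : ∫ θ in Cn, ρ θ = ∫ θ in Sn, ρ θ := by
    conv_lhs => rw [hρrestrict]
    rw [setIntegral_indicator measurableSet_Ico]
  have h2 : ∫ θ, ρ θ = ∫ θ in Set.Ico (0:ℝ) 1, ρ θ := by
    conv_lhs => rw [hρrestrict]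
    rw [integral_indicator measurableSet_Ico]
  -- three-term bound
  have t1 : |(∫ θ in Sn, ρ θ) - ∫ θ in Sn, φ θ| ≤ ε/4 := by
    rw [← integral_sub hint.integrableOn hφint.integrableOn]
    calc |∫ θ in Sn, (ρ θ - φ θ)| ≤ ∫ θ in Sn, ‖ρ θ - φ θ‖ := by
          simpa [Real.norm_eq_abs] using norm_integral_le_integral_norm (μ := volume.restrict Sn)
            (f := fun θ => ρ θ - φ θ)
      _ ≤ ε/4 := hnormle Sn
  have t3 : |Lb * (∫ θ in Set.Ico (0:ℝ) 1, φ θ) - Lb * ∫ θ in Set.Ico (0:ℝ) 1, ρ θ| ≤ ε/4 := by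
    rw [← mul_sub, abs_mul, abs_of_nonneg hLb0]
    have : |(∫ θ in Set.Ico (0:ℝ) 1, φ θ) - ∫ θ in Set.Ico (0:ℝ) 1, ρ θ| ≤ ε/4 := by
      rw [← integral_sub hφint.integrableOn hint.integrableOn]
      calc |∫ θ in Set.Ico (0:ℝ) 1, (φ θ - ρ θ)| ≤ ∫ θ in Set.Ico (0:ℝ) 1, ‖φ θ - ρ θ‖ := by
            simpa [Real.norm_eq_abs] using norm_integral_le_integral_norm
              (μ := volume.restrict (Set.Ico (0:ℝ) 1)) (f := fun θ => φ θ - ρ θ)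
        _ = ∫ θ in Set.Ico (0:ℝ) 1, ‖ρ θ - φ θ‖ := by
            congr 1; funext θ; rw [norm_sub_rev]
        _ ≤ ε/4 := hnormle _
    calc Lb * |(∫ θ in Set.Ico (0:ℝ) 1, φ θ) - ∫ θ in Set.Ico (0:ℝ) 1, ρ θ| ≤ 1 * (ε/4) := by
          apply mul_le_mul hLb1 this (abs_nonneg _) (by norm_num)
      _ = ε/4 := by ring
  have t2 : |(∫ θ in Sn, φ θ) - Lb * ∫ θ in Set.Ico (0:ℝ) 1, φ θ| < ε/4 := by
    have := hN n hn
    rwa [Real.dist_eq] at this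
  rw [Real.dist_eq, h1, h2]
  calc |(∫ θ in Sn, ρ θ) - Lb * ∫ θ in Set.Ico (0:ℝ) 1, ρ θ|
      ≤ |(∫ θ in Sn, ρ θ) - ∫ θ in Sn, φ θ|
        + |(∫ θ in Sn, φ θ) - Lb * ∫ θ in Set.Ico (0:ℝ) 1, φ θ|
        + |Lb * (∫ θ in Set.Ico (0:ℝ) 1, φ θ) - Lb * ∫ θ in Set.Ico (0:ℝ) 1, ρ θ| := by
        have := abs_sub_le ((∫ θ in Sn, ρ θ)) (∫ θ in Sn, φ θ) (Lb * ∫ θ in Set.Ico (0:ℝ) 1, ρ θ)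
        have h4 := abs_sub_le ((∫ θ in Sn, φ θ)) (Lb * ∫ θ in Set.Ico (0:ℝ) 1, φ θ)
          (Lb * ∫ θ in Set.Ico (0:ℝ) 1, ρ θ)
        linarith
    _ < ε/4 + ε/4 + ε/4 := by
        have := add_lt_add_of_le_of_lt t1 t2
        linarith [t3]
    _ < ε := by linarith

section front
variable (p₀ : ℝ → ℝ)

-- the pulled-back density (raw, before cutoff)
noncomputable def rawDen (θ : ℝ) : ℝ := Real.pi * Real.sin (2 * (Real.pi * θ)) * p₀ (sMap θ)

lemma sin_nonneg_on_half {θ : ℝ} (hθ : θ ∈ Set.Icc (0:ℝ) (1/2)) :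
    0 ≤ Real.sin (2 * (Real.pi * θ)) := by
  have pi_pos := Real.pi_pos
  exact Real.sin_nonneg_of_nonneg_of_le_pi (by nlinarith [hθ.1]) (by nlinarith [hθ.2])

lemma key_cov (W : Set ℝ) (hW : MeasurableSet W) :
    ∫ θ in Set.Icc 0 (1/2) ∩ sMap ⁻¹' W, rawDen p₀ θ = ∫ x in W ∩ Set.Icc 0 1, p₀ x := by
  have hE : MeasurableSet (Set.Icc (0:ℝ) (1/2) ∩ sMap ⁻¹' W) :=
    measurableSet_Icc.inter (sMap_continuous.measurable hW)
  have hderiv : ∀ θ ∈ Set.Icc (0:ℝ) (1/2) ∩ sMap ⁻¹' W,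
      HasDerivWithinAt sMap (Real.pi * Real.sin (2 * (Real.pi * θ)))
        (Set.Icc (0:ℝ) (1/2) ∩ sMap ⁻¹' W) θ :=
    fun θ _ => (hasDerivAt_sMap θ).hasDerivWithinAt
  have hinj : Set.InjOn sMap (Set.Icc (0:ℝ) (1/2) ∩ sMap ⁻¹' W) :=
    sMap_injOn.mono Set.inter_subset_left
  have := MeasureTheory.integral_image_eq_integral_abs_deriv_smul hE hderiv hinj p₀
  rw [sMap_image_inter W] at this
  rw [this]
  apply setIntegral_congr_fun hE
  intro θ hθ
  have h1 : 0 ≤ Real.sin (2 * (Real.pi * θ)) := sin_nonneg_on_half hθ.1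
  show rawDen p₀ θ = |Real.pi * Real.sin (2 * (Real.pi * θ))| • p₀ (sMap θ)
  rw [smul_eq_mul, rawDen, abs_of_nonneg (by positivity)]

end front


noncomputable def rhoDen (p₀ : ℝ → ℝ) (θ : ℝ) : ℝ :=
  (Set.Icc (0:ℝ) (1/2)).indicator (rawDen p₀) θ

lemma rhoDen_nonneg (p₀ : ℝ → ℝ) (hpos : ∀ x, 0 ≤ p₀ x) : ∀ θ, 0 ≤ rhoDen p₀ θ := by
  intro θ
  rw [rhoDen, Set.indicator_apply]
  split_ifs with h
  · have h1 := sin_nonneg_on_half h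
    have h2 := hpos (sMap θ)
    have h3 := Real.pi_pos
    rw [rawDen]
    positivity
  · exact le_refl 0

lemma rhoDen_supp (p₀ : ℝ → ℝ) : ∀ θ, θ ∉ Set.Ico (0:ℝ) 1 → rhoDen p₀ θ = 0 := by
  intro θ hθ
  rw [rhoDen, Set.indicator_apply, if_neg]
  intro h
  exact hθ ⟨h.1, lt_of_le_of_lt h.2 (by norm_num)⟩

lemma rawDen_integrableOn (p₀ : ℝ → ℝ) (hint : IntegrableOn p₀ (Set.Icc (0 : ℝ) 1)) :
    IntegrableOn (rawDen p₀) (Set.Icc (0:ℝ) (1/2)) := by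
  have hE : MeasurableSet (Set.Icc (0:ℝ) (1/2)) := measurableSet_Icc
  have hderiv : ∀ θ ∈ Set.Icc (0:ℝ) (1/2),
      HasDerivWithinAt sMap (Real.pi * Real.sin (2 * (Real.pi * θ))) (Set.Icc (0:ℝ) (1/2)) θ :=
    fun θ _ => (hasDerivAt_sMap θ).hasDerivWithinAt
  have hiff := MeasureTheory.integrableOn_image_iff_integrableOn_abs_deriv_smul
    hE hderiv sMap_injOn p₀
  rw [sMap_image] at hiff
  have h2 := hiff.1 hint
  apply h2.congr_fun ?_ hE
  intro θ hθ
  have h1 : 0 ≤ Real.sin (2 * (Real.pi * θ)) := sin_nonneg_on_half hθ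
  show |Real.pi * Real.sin (2 * (Real.pi * θ))| • p₀ (sMap θ) = rawDen p₀ θ
  rw [smul_eq_mul, rawDen, abs_of_nonneg (by positivity)]

lemma rhoDen_integrable (p₀ : ℝ → ℝ) (hint : IntegrableOn p₀ (Set.Icc (0 : ℝ) 1)) :
    Integrable (rhoDen p₀) := by
  have : Integrable ((Set.Icc (0:ℝ) (1/2)).indicator (rawDen p₀)) :=
    (integrable_indicator_iff measurableSet_Icc).2 (rawDen_integrableOn p₀ hint)
  exact this

lemma rhoDen_mass (p₀ : ℝ → ℝ) (hint : IntegrableOn p₀ (Set.Icc (0 : ℝ) 1))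
    (hnorm : ∫ x in Set.Icc (0 : ℝ) 1, p₀ x = 1) : ∫ θ, rhoDen p₀ θ = 1 := by
  have h1 : ∫ θ, rhoDen p₀ θ = ∫ θ in Set.Icc (0:ℝ) (1/2), rawDen p₀ θ :=
    integral_indicator measurableSet_Icc
  have h2 := key_cov p₀ Set.univ MeasurableSet.univ
  rw [Set.preimage_univ, Set.inter_univ, Set.univ_inter] at h2
  rw [h1, h2, hnorm]

lemma logisticMap_measurable : Measurable logisticMap := by
  have : Continuous logisticMap := by unfold logisticMap; fun_prop
  exact this.measurable

lemma preimage_iter_eq (A : Set ℝ) (n : ℕ) :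
    sMap ⁻¹' (logisticMap^[n] ⁻¹' A)
      = (fun θ => Int.fract ((2:ℝ)^n * θ)) ⁻¹' (sMap ⁻¹' A ∩ Set.Ico 0 1) := by
  ext θ
  simp only [Set.mem_preimage, Set.mem_inter_iff, Set.mem_Ico]
  rw [iter_logisticMap_sMap, ← sMap_fract]
  constructor
  · intro h
    exact ⟨h, Int.fract_nonneg _, Int.fract_lt_one _⟩
  · intro h
    exact h.1

lemma per_n (p₀ : ℝ → ℝ) (hpos : ∀ x, 0 ≤ p₀ x)
    (hsupp : ∀ x, x ∉ Set.Icc (0 : ℝ) 1 → p₀ x = 0)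
    (hint : IntegrableOn p₀ (Set.Icc (0 : ℝ) 1))
    (A : Set ℝ) (hA : MeasurableSet A) (n : ℕ) :
    ((volume.withDensity (fun x => ENNReal.ofReal (p₀ x))).map (logisticMap^[n])) A
      = ENNReal.ofReal (∫ θ in (fun θ => Int.fract ((2:ℝ)^n * θ)) ⁻¹' (sMap ⁻¹' A ∩ Set.Ico 0 1),
          rhoDen p₀ θ) := by
  have hFn : Measurable (logisticMap^[n]) := logisticMap_measurable.iterate n
  rw [Measure.map_apply hFn hA]
  have hWm : MeasurableSet (logisticMap^[n] ⁻¹' A) := hFn hA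
  rw [withDensity_apply _ hWm]
  -- restrict to [0,1]
  have hind : (fun x => ENNReal.ofReal (p₀ x))
      = (Set.Icc (0:ℝ) 1).indicator (fun x => ENNReal.ofReal (p₀ x)) := by
    funext x
    rw [Set.indicator_apply]
    split_ifs with h
    · rfl
    · simp [hsupp x h]
  conv_lhs => rw [hind]
  rw [setLIntegral_indicator measurableSet_Icc]
  rw [← ofReal_integral_eq_lintegral_ofReal
    (hint.mono_set Set.inter_subset_left)
    ((ae_restrict_iff' (measurableSet_Icc.inter hWm)).2 (Filter.Eventually.of_forall (fun x _ => hpos x)))]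
  congr 1
  rw [Set.inter_comm, ← key_cov p₀ _ hWm, preimage_iter_eq A n]
  set Cn := (fun θ => Int.fract ((2:ℝ)^n * θ)) ⁻¹' (sMap ⁻¹' A ∩ Set.Ico 0 1) with hCn
  rw [show (rhoDen p₀) = ((Set.Icc (0:ℝ) (1/2)).indicator (rawDen p₀)) from rfl]
  rw [setIntegral_indicator measurableSet_Icc, Set.inter_comm]

lemma integrand_two (A : Set ℝ) (hA : MeasurableSet A) :
    ∫ θ in Set.Icc 0 (1/2) ∩ sMap ⁻¹' A, |Real.pi * Real.sin (2 * (Real.pi * θ))| • logisticDensity (sMap θ)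
      = 2 * (volume (Set.Icc 0 (1/2) ∩ sMap ⁻¹' A)).toReal := by
  have hE : MeasurableSet (Set.Icc (0:ℝ) (1/2) ∩ sMap ⁻¹' A) :=
    measurableSet_Icc.inter (sMap_continuous.measurable hA)
  have hnull : volume ({0, 1/2} : Set ℝ) = 0 :=
    (Set.toFinite _).measure_zero volume
  have hae : ∀ᵐ θ : ℝ, θ ∉ ({0, 1/2} : Set ℝ) := measure_eq_zero_iff_ae_notMem.mp hnull
  rw [setIntegral_congr_ae hE (g := fun _ => (2:ℝ)) ?_, setIntegral_const, measureReal_def, smul_eq_mul, mul_comm]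
  filter_upwards [hae] with θ hθ01 hθE
  have pi_pos := Real.pi_pos
  have h0 : 0 ≤ θ := hθE.1.1
  have h2 : θ ≤ 1/2 := hθE.1.2
  have hne0 : θ ≠ 0 := fun h => hθ01 (by simp [h])
  have hne2 : θ ≠ 1/2 := fun h => hθ01 (by simp [h])
  have h0' : 0 < θ := lt_of_le_of_ne h0 (Ne.symm hne0)
  have h2' : θ < 1/2 := lt_of_le_of_ne h2 hne2
  have hu : 0 < Real.sin (Real.pi * θ) :=
    Real.sin_pos_of_pos_of_lt_pi (by nlinarith) (by nlinarith)
  have hv : 0 < Real.cos (Real.pi * θ) :=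
    Real.cos_pos_of_mem_Ioo ⟨by nlinarith, by nlinarith⟩
  have huv := Real.sin_sq_add_cos_sq (Real.pi * θ)
  set u := Real.sin (Real.pi * θ) with hu'
  set v := Real.cos (Real.pi * θ) with hv'
  have hs1 : sMap θ = u^2 := rfl
  have hlt1 : u^2 < 1 := by nlinarith
  have hpos1 : 0 < u^2 := by positivity
  have hq : logisticDensity (sMap θ) = 1 / (Real.pi * (u * v)) := by
    rw [hs1, logisticDensity, if_pos ⟨hpos1, hlt1⟩]
    congr 2
    rw [show u^2 * (1 - u^2) = (u*v)^2 by nlinarith]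
    exact Real.sqrt_sq (by positivity)
  have hsin2 : Real.sin (2 * (Real.pi * θ)) = 2 * (u * v) := by
    rw [Real.sin_two_mul]; ring
  rw [smul_eq_mul, hq, hsin2, abs_of_nonneg (by positivity)]
  field_simp

lemma volume_B_eq (A : Set ℝ) (hA : MeasurableSet A) :
    volume (sMap ⁻¹' A ∩ Set.Ico 0 1)
      = 2 * volume (Set.Icc 0 (1/2) ∩ sMap ⁻¹' A) := by
  set X := sMap ⁻¹' A with hX
  have hXm : MeasurableSet X := sMap_continuous.measurable hA
  have hsplit : X ∩ Set.Ico 0 1 = (X ∩ Set.Ico 0 (1/2)) ∪ (X ∩ Set.Ico (1/2) 1) := by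
    rw [← Set.Ico_union_Ico_eq_Ico (by norm_num : (0:ℝ) ≤ 1/2) (by norm_num : (1:ℝ)/2 ≤ 1)]
    exact Set.inter_union_distrib_left X _ _
  have hdisj : Disjoint (X ∩ Set.Ico (0:ℝ) (1/2)) (X ∩ Set.Ico (1/2:ℝ) 1) :=
    (Set.Ico_disjoint_Ico_same).mono Set.inter_subset_right Set.inter_subset_right
  rw [hsplit, measure_union hdisj (hXm.inter measurableSet_Ico)]
  -- reflection
  have hr : MeasurePreserving (fun θ : ℝ => 1 - θ) volume volume := by
    have h1 := Measure.measurePreserving_neg (volume : Measure ℝ)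
    have h2 := measurePreserving_add_left (volume : Measure ℝ) 1
    have h3 := h2.comp h1
    have : ((fun h : ℝ => 1 + h) ∘ (fun x : ℝ => -x)) = (fun θ : ℝ => 1 - θ) := by
      funext x; simp [sub_eq_add_neg]
    rwa [this] at h3
  have hpre : (fun θ : ℝ => 1 - θ) ⁻¹' (X ∩ Set.Ico (1/2) 1) = X ∩ Set.Ioc 0 (1/2) := by
    ext θ
    simp only [Set.mem_preimage, Set.mem_inter_iff, Set.mem_Ico, Set.mem_Ioc, hX,
      sMap_one_sub]
    constructor
    · rintro ⟨h1, h2, h3⟩; exact ⟨h1, by linarith, by linarith⟩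
    · rintro ⟨h1, h2, h3⟩; exact ⟨h1, by linarith, by linarith⟩
  have hrefl : volume (X ∩ Set.Ico (1/2:ℝ) 1) = volume (X ∩ Set.Ioc (0:ℝ) (1/2)) := by
    rw [← hr.measure_preimage (hXm.inter measurableSet_Ico).nullMeasurableSet, hpre]
  rw [hrefl]
  have e1 : volume (X ∩ Set.Ico (0:ℝ) (1/2)) = volume (X ∩ Set.Icc (0:ℝ) (1/2)) :=
    measure_congr (Filter.EventuallyEq.inter (Filter.EventuallyEq.refl _ _) Ico_ae_eq_Icc)
  have e2 : volume (X ∩ Set.Ioc (0:ℝ) (1/2)) = volume (X ∩ Set.Icc (0:ℝ) (1/2)) :=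
    measure_congr (Filter.EventuallyEq.inter (Filter.EventuallyEq.refl _ _) Ioc_ae_eq_Icc)
  rw [e1, e2, Set.inter_comm X, two_mul]

lemma target_eq (A : Set ℝ) (hA : MeasurableSet A) (hAsub : A ⊆ Set.Icc (0 : ℝ) 1) :
    ∫ x in A, logisticDensity x = (volume (sMap ⁻¹' A ∩ Set.Ico 0 1)).toReal := by
  have hE : MeasurableSet (Set.Icc (0:ℝ) (1/2) ∩ sMap ⁻¹' A) :=
    measurableSet_Icc.inter (sMap_continuous.measurable hA)
  have hderiv : ∀ θ ∈ Set.Icc (0:ℝ) (1/2) ∩ sMap ⁻¹' A,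
      HasDerivWithinAt sMap (Real.pi * Real.sin (2 * (Real.pi * θ)))
        (Set.Icc (0:ℝ) (1/2) ∩ sMap ⁻¹' A) θ :=
    fun θ _ => (hasDerivAt_sMap θ).hasDerivWithinAt
  have hinj : Set.InjOn sMap (Set.Icc (0:ℝ) (1/2) ∩ sMap ⁻¹' A) :=
    sMap_injOn.mono Set.inter_subset_left
  have hcov := MeasureTheory.integral_image_eq_integral_abs_deriv_smul hE hderiv hinj logisticDensity
  rw [sMap_image_inter A, Set.inter_eq_left.mpr hAsub] at hcov
  rw [hcov, integrand_two A hA, volume_B_eq A hA]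
  have hfin : volume (Set.Icc (0:ℝ) (1/2) ∩ sMap ⁻¹' A) ≠ ⊤ := by
    apply ne_of_lt
    calc volume (Set.Icc (0:ℝ) (1/2) ∩ sMap ⁻¹' A) ≤ volume (Set.Icc (0:ℝ) (1/2)) :=
      measure_mono Set.inter_subset_left
    _ < ⊤ := by rw [Real.volume_Icc]; exact ENNReal.ofReal_lt_top
  rw [ENNReal.toReal_mul]
  norm_num

theorem logistic_setwise_convergence
    (p₀ : ℝ → ℝ) (hmeas : Measurable p₀) (hpos : ∀ x, 0 ≤ p₀ x)
    (hsupp : ∀ x, x ∉ Set.Icc (0 : ℝ) 1 → p₀ x = 0)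
    (hint : IntegrableOn p₀ (Set.Icc (0 : ℝ) 1))
    (hnorm : ∫ x in Set.Icc (0 : ℝ) 1, p₀ x = 1)
    (A : Set ℝ) (hA : MeasurableSet A) (hAsub : A ⊆ Set.Icc (0 : ℝ) 1) :
    Tendsto
      (fun n : ℕ =>
        ((volume.withDensity (fun x => ENNReal.ofReal (p₀ x))).map (logisticMap^[n])) A)
      atTop (𝓝 (ENNReal.ofReal (∫ x in A, logisticDensity x))) := by
  have hBm : MeasurableSet (sMap ⁻¹' A ∩ Set.Ico 0 1) :=
    (sMap_continuous.measurable hA).inter measurableSet_Ico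
  have hBs : (sMap ⁻¹' A ∩ Set.Ico 0 1) ⊆ Set.Ico (0:ℝ) 1 := Set.inter_subset_right
  have hcore := core (rhoDen p₀) (rhoDen_nonneg p₀ hpos) (rhoDen_supp p₀)
    (rhoDen_integrable p₀ hint) _ hBm hBs
  rw [rhoDen_mass p₀ hint hnorm, mul_one] at hcore
  have htends := (ENNReal.continuous_ofReal.tendsto _).comp hcore
  rw [target_eq A hA hAsub]
  exact Tendsto.congr (fun n => (per_n p₀ hpos hsupp hint A hA n).symm) htends
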